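/- If a_1, ..., a_d and b_1, ..., b_d are real numbers with a_1 < a_2 < ... < a_d, b_1 < b_2 < ... < b_d, and {a_1,...,a_d} ≠ {b_1,...,b_d}, then one can write the formal difference δ_{a_1}+...+δ_{a_d} − δ_{b_1}−...−δ_{b_d} as ∑_{j=1}^m ε_j δ_{u_j} for some even integer m with 2 ≤ m ≤ 2d, strictly increasing u_1 < ... < u_m, signs ε_j ∈ {−1,+1} with ∑_j ε_j = 0, and such that the sequence of partial sums α_l = ∑_{j=1}^l ε_j changes sign at most d−1 times. -/
import Mathlib

private lemma steinig_stepA {x y z : ℤ} (hx : x < 0) (hz : z = 1 ∨ z = -1)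
    (hy : y = x + z) (hny : y ≠ 0) : y < 0 := by omega

private lemma steinig_stepB {x y z : ℤ} (hz : z = 1 ∨ z = -1) (hy : y = x + z)
    (h : 0 < x ∧ y < 0 ∨ x < 0 ∧ 0 < y) : False := by omega

private lemma steinig_stepC {x y z : ℤ} (hx : x = 0) (hy : y = 0) (hst : y = x + z)
    (hz : z = 1 ∨ z = -1) : False := by omega

private lemma steinig_stepD {x y z : ℤ} (hx : x = 0) (hst : y = x + z) (hpos : 0 < y)
    (hz : z = 1 ∨ z = -1) : z = 1 := by omega

private lemma steinig_stepE {x y z : ℤ} (hy : y = 0) (hst : y = x + z) (hx : x < 0)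
    (hz : z = 1 ∨ z = -1) : z = 1 := by omega

lemma steinig_key (m : ℕ) (hm : 1 ≤ m) (ε : Fin m → ℝ)
    (hε : ∀ j, ε j = 1 ∨ ε j = -1) (hsum : ∑ j, ε j = 0) :
    Set.ncard {p : Fin m × Fin m |
        p.1 < p.2 ∧ (∑ j ∈ Finset.Iic p.1, ε j) * (∑ j ∈ Finset.Iic p.2, ε j) < 0 ∧
        ∀ l, p.1 < l → l < p.2 → (∑ j ∈ Finset.Iic l, ε j) = 0} ≤ m / 2 - 1 := by
  classical
  obtain ⟨e, s, hepm, hs0, hstep, hα, hsm, hPcard⟩ :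
      ∃ (e : ℕ → ℤ) (s : ℕ → ℤ),
        (∀ n, n < m → e n = 1 ∨ e n = -1) ∧
        s 0 = 0 ∧
        (∀ n, s (n + 1) = s n + e n) ∧
        (∀ l : Fin m, (∑ j ∈ Finset.Iic l, ε j) = ((s (l.val + 1) : ℤ) : ℝ)) ∧
        s m = 0 ∧
        ((Finset.range m).filter (fun n => e n = 1)).card = m / 2 := by
    refine ⟨fun n => if h : n < m then (if ε ⟨n, h⟩ = 1 then 1 else -1) else 1,
      fun n => ∑ j ∈ Finset.range n, if h : j < m then (if ε ⟨j, h⟩ = 1 then 1 else -1) else 1,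
      ?_, ?_, ?_, ?_, ?_, ?_⟩
    · intro n h
      rcases hε ⟨n, h⟩ with h1 | h1 <;> simp [h, h1] <;> norm_num
    · simp
    · intro n; simp [Finset.sum_range_succ]
    · intro l
      have he1 : ∀ n (h : n < m),
          (((if h : n < m then (if ε ⟨n, h⟩ = 1 then (1:ℤ) else -1) else 1) : ℤ) : ℝ) = ε ⟨n, h⟩ := by
        intro n h
        rcases hε ⟨n, h⟩ with h1 | h1 <;> simp [h, h1] <;> norm_num
      have key : ∑ j ∈ Finset.Iic l, ε j
          = ∑ t ∈ Finset.range (l.val + 1),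
              (((if h : t < m then (if ε ⟨t, h⟩ = 1 then (1:ℤ) else -1) else 1) : ℤ) : ℝ) := by
        refine Finset.sum_nbij' (fun j => (j : ℕ)) (fun t => if h : t < m then ⟨t, h⟩ else l)
          ?_ ?_ ?_ ?_ ?_
        · intro a haa
          simp only [Finset.mem_Iic] at haa
          simp only [Finset.mem_range]
          exact Nat.lt_succ_of_le haa
        · intro t ht
          simp only [Finset.mem_range] at ht
          have htm : t < m := lt_of_lt_of_le ht l.isLt
          simp only [dif_pos htm, Finset.mem_Iic]
          exact Fin.mk_le_of_le_val (Nat.lt_succ_iff.mp ht)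
        · intro a _; simp
        · intro t ht
          simp only [Finset.mem_range] at ht
          have htm : t < m := lt_of_lt_of_le ht l.isLt
          simp [dif_pos htm]
        · intro a _
          rw [he1 a a.isLt]
      rw [key]
      push_cast
      rfl
    · have he1 : ∀ n (h : n < m),
          (((if h : n < m then (if ε ⟨n, h⟩ = 1 then (1:ℤ) else -1) else 1) : ℤ) : ℝ) = ε ⟨n, h⟩ := by
        intro n h
        rcases hε ⟨n, h⟩ with h1 | h1 <;> simp [h, h1] <;> norm_num
      have h2 : ∑ t ∈ Finset.range m,
          (((if h : t < m then (if ε ⟨t, h⟩ = 1 then (1:ℤ) else -1) else 1) : ℤ) : ℝ)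
          = ∑ j : Fin m, ε j := by
        rw [← Fin.sum_univ_eq_sum_range]
        exact Finset.sum_congr rfl fun j _ => he1 j j.isLt
      have : ((∑ j ∈ Finset.range m,
          (if h : j < m then (if ε ⟨j, h⟩ = 1 then (1:ℤ) else -1) else 1) : ℤ) : ℝ) = 0 := by
        push_cast
        rw [h2, hsum]
      exact_mod_cast this
    · -- cardinality of plus steps
      set e' : ℕ → ℤ := fun n => if h : n < m then (if ε ⟨n, h⟩ = 1 then 1 else -1) else 1 with he'
      have hepm' : ∀ n, n < m → e' n = 1 ∨ e' n = -1 := by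
        intro n h
        rcases hε ⟨n, h⟩ with h1 | h1 <;> simp [he', h, h1] <;> norm_num
      have hsm' : ∑ j ∈ Finset.range m, e' j = 0 := by
        have he1 : ∀ n (h : n < m), ((e' n : ℤ) : ℝ) = ε ⟨n, h⟩ := by
          intro n h
          rcases hε ⟨n, h⟩ with h1 | h1 <;> simp [he', h, h1] <;> norm_num
        have h2 : ∑ t ∈ Finset.range m, ((e' t : ℤ) : ℝ) = ∑ j : Fin m, ε j := by
          rw [← Fin.sum_univ_eq_sum_range]
          exact Finset.sum_congr rfl fun j _ => he1 j j.isLt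
        have : ((∑ j ∈ Finset.range m, e' j : ℤ) : ℝ) = 0 := by
          push_cast
          rw [h2, hsum]
        exact_mod_cast this
      have hsplit := Finset.sum_filter_add_sum_filter_not (Finset.range m) (fun n => e' n = 1) e'
      have h1 : ∑ x ∈ (Finset.range m).filter (fun n => e' n = 1), e' x
          = (((Finset.range m).filter (fun n => e' n = 1)).card : ℤ) := by
        rw [Finset.sum_congr rfl (fun x hx => (Finset.mem_filter.mp hx).2)]
        simp
      have h2 : ∑ x ∈ (Finset.range m).filter (fun n => ¬ e' n = 1), e' x
          = -((((Finset.range m).filter (fun n => ¬ e' n = 1)).card : ℤ)) := by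
        have hall : ∀ x ∈ (Finset.range m).filter (fun n => ¬ e' n = 1), e' x = -1 := by
          intro x hx
          have hx' := Finset.mem_filter.mp hx
          rcases hepm' x (Finset.mem_range.mp hx'.1) with h | h
          · exact absurd h hx'.2
          · exact h
        rw [Finset.sum_congr rfl hall]
        simp
      have h3 : ((Finset.range m).filter (fun n => e' n = 1)).card
          + ((Finset.range m).filter (fun n => ¬ e' n = 1)).card = m := by
        rw [Finset.card_filter_add_card_filter_not]
        simp
      rw [h1, h2, hsm'] at hsplit
      omega
  -- the negative-run lemma
  have hrun : ∀ a b : ℕ, a ≤ b → b ≤ m → s a < 0 →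
      (∀ t, a < t → t ≤ b → s t ≠ 0) → s b < 0 := by
    intro a b hab
    induction b, hab using Nat.le_induction with
    | base => intro _ h _; exact h
    | succ b hb ih =>
      intro hbm ha hz
      have hsb : s b < 0 := by
        refine ih (by omega) ha ?_
        intro t h1 h2; exact hz t h1 (by omega)
      have hst : s (b + 1) = s b + e b := hstep b
      have hb' : b < m := by omega
      have hnz : s (b + 1) ≠ 0 := hz (b + 1) (by omega) le_rfl
      exact steinig_stepA hsb (hepm b hb') hst hnz

  -- pair structure
  set S : Set (Fin m × Fin m) := {p : Fin m × Fin m |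
      p.1 < p.2 ∧ (∑ j ∈ Finset.Iic p.1, ε j) * (∑ j ∈ Finset.Iic p.2, ε j) < 0 ∧
      ∀ l, p.1 < l → l < p.2 → (∑ j ∈ Finset.Iic l, ε j) = 0} with hS_def
  have hpair : ∀ p : Fin m × Fin m, p ∈ S → p.2.val = p.1.val + 2 ∧ s (p.1.val + 2) = 0 ∧
      s (p.1.val + 1) * s (p.1.val + 3) < 0 := by
    intro p hp
    rw [hS_def, Set.mem_setOf_eq] at hp
    obtain ⟨hlt, hprod, hmid⟩ := hp
    rw [hα p.1, hα p.2] at hprod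
    have hprod' : s (p.1.val + 1) * s (p.2.val + 1) < 0 := by exact_mod_cast hprod
    have hne1 : s (p.1.val + 1) ≠ 0 := by
      intro h; rw [h] at hprod'; simp at hprod'
    have hne2 : s (p.2.val + 1) ≠ 0 := by
      intro h; rw [h] at hprod'; simp at hprod'
    have hltv : p.1.val < p.2.val := hlt
    have h22 : p.2.val = p.1.val + 2 := by
      rcases Nat.lt_or_ge p.2.val (p.1.val + 2) with h | h
      · have hv : p.2.val = p.1.val + 1 := by omega
        exfalso
        have hkey : s (p.2.val + 1) = s (p.1.val + 1) + e (p.1.val + 1) := by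
          rw [hv]; exact hstep _
        have hb' : p.1.val + 1 < m := by rw [← hv]; exact p.2.isLt
        exact steinig_stepB (hepm (p.1.val + 1) hb') hkey (mul_neg_iff.mp hprod')
      · have h1m : p.1.val + 1 < m := by omega
        have hz1 : s (p.1.val + 2) = 0 := by
          have := hmid ⟨p.1.val + 1, h1m⟩ (by exact Nat.lt_succ_self _) (by
            show p.1.val + 1 < p.2.val; omega)
          rw [hα] at this
          exact_mod_cast this
        by_contra hcon
        have h2m : p.1.val + 2 < m := by omega
        have hz2 : s (p.1.val + 3) = 0 := by
          have := hmid ⟨p.1.val + 2, h2m⟩ (by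
            show p.1.val < p.1.val + 2; omega) (by
            show p.1.val + 2 < p.2.val; omega)
          rw [hα] at this
          exact_mod_cast this
        have hst2 : s (p.1.val + 3) = s (p.1.val + 2) + e (p.1.val + 2) := by
          have h' := hstep (p.1.val + 2)
          have heq : p.1.val + 2 + 1 = p.1.val + 3 := by omega
          rw [heq] at h'
          exact h'
        exact steinig_stepC hz1 hz2 hst2 (hepm (p.1.val + 2) h2m)
    refine ⟨h22, ?_, ?_⟩
    · have h1m : p.1.val + 1 < m := by omega
      have := hmid ⟨p.1.val + 1, h1m⟩ (Nat.lt_succ_self _) (by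
        show p.1.val + 1 < p.2.val; omega)
      rw [hα] at this
      exact_mod_cast this
    · rw [h22] at hprod'
      exact hprod'
  -- the injection
  obtain ⟨Φ, hΦ_def⟩ : ∃ Φ : Fin m × Fin m → ℕ, Φ = fun p =>
      if 0 < s (p.1.val + 3) then p.1.val + 2
      else sInf {t | p.1.val + 2 < t ∧ s t = 0} - 1 := ⟨_, rfl⟩
  set P : Finset ℕ := (Finset.range m).filter (fun n => e n = 1) with hP_def
  -- facts about the injection
  have hΦfacts : ∀ p : Fin m × Fin m, p ∈ S →
      e (Φ p) = 1 ∧ Φ p < m ∧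
      ((Φ p = p.1.val + 2 ∧ s (Φ p) = 0) ∨
       (s (Φ p) < 0 ∧ p.1.val + 2 < Φ p ∧
        (∀ t, p.1.val + 2 < t → s t = 0 → Φ p + 1 ≤ t))) := by
    intro p hp
    obtain ⟨h22, hzn, hsgn⟩ := hpair p hp
    have hnm : p.1.val + 2 < m := by rw [← h22]; exact p.2.isLt
    have hne3 : s (p.1.val + 3) ≠ 0 := by
      intro h; rw [h] at hsgn; simp at hsgn
    by_cases hpos : 0 < s (p.1.val + 3)
    · have hΦp : Φ p = p.1.val + 2 := by simp only [hΦ_def, if_pos hpos]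
      have hst : s (p.1.val + 3) = s (p.1.val + 2) + e (p.1.val + 2) := by
        have h' := hstep (p.1.val + 2)
        have heq : p.1.val + 2 + 1 = p.1.val + 3 := by omega
        rw [heq] at h'
        exact h'
      have he2 : e (p.1.val + 2) = 1 := steinig_stepD hzn hst hpos (hepm (p.1.val + 2) hnm)
      rw [hΦp]
      exact ⟨he2, hnm, Or.inl ⟨rfl, hzn⟩⟩
    · have hneg : s (p.1.val + 3) < 0 := by
        rcases lt_trichotomy (s (p.1.val + 3)) 0 with h | h | h
        · exact h
        · exact absurd h hne3
        · exact absurd h hpos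
      have hTne : m ∈ {t | p.1.val + 2 < t ∧ s t = 0} := ⟨hnm, hsm⟩
      obtain ⟨j, hj_def⟩ : ∃ j : ℕ, j = sInf {t | p.1.val + 2 < t ∧ s t = 0} := ⟨_, rfl⟩
      have hjmem : p.1.val + 2 < j ∧ s j = 0 := hj_def ▸ Nat.sInf_mem ⟨m, hTne⟩
      have hjle : j ≤ m := hj_def ▸ Nat.sInf_le hTne
      have hmin : ∀ t, p.1.val + 2 < t → s t = 0 → j ≤ t :=
        fun t h1 h2 => hj_def ▸ Nat.sInf_le ⟨h1, h2⟩
      have hΦp : Φ p = j - 1 := by simp only [hΦ_def, if_neg hpos]; rw [← hj_def]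
      have hj2 : p.1.val + 4 ≤ j := by
        rcases Nat.lt_or_ge j (p.1.val + 4) with h | h
        · exfalso
          have : j = p.1.val + 3 := by omega
          rw [this] at hjmem
          exact hne3 hjmem.2
        · exact h
      have hrneg : s (j - 1) < 0 := by
        refine hrun (p.1.val + 3) (j - 1) (by omega) (by omega) hneg ?_
        intro t h1 h2 hzt
        have := hmin t (by omega) hzt
        omega
      have hstj : s j = s (j - 1) + e (j - 1) := by
        have := hstep (j - 1)
        have hj1 : j - 1 + 1 = j := by omega
        rw [hj1] at this
        exact this
      have hej : e (j - 1) = 1 :=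
        steinig_stepE hjmem.2 hstj hrneg (hepm (j - 1) (by omega))
      rw [hΦp]
      refine ⟨hej, by omega, Or.inr ⟨hrneg, by omega, ?_⟩⟩
      intro t h1 h2
      have := hmin t h1 h2
      omega
  -- membership of images
  have hΦmem : ∀ p : Fin m × Fin m, p ∈ S → Φ p ∈ P := by
    intro p hp
    obtain ⟨h1, h2, _⟩ := hΦfacts p hp
    rw [hP_def]
    simp only [Finset.mem_filter, Finset.mem_range]
    exact ⟨h2, h1⟩
  -- strict monotonicity / injectivity
  have hmono : ∀ p ∈ S, ∀ q ∈ S, p.1.val < q.1.val → Φ p < Φ q := by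
    intro p hp q hq hlt
    obtain ⟨_, hzp, _⟩ := hpair p hp
    obtain ⟨_, hzq, _⟩ := hpair q hq
    obtain ⟨_, _, hcp⟩ := hΦfacts p hp
    obtain ⟨_, _, hcq⟩ := hΦfacts q hq
    rcases hcp with ⟨hp1, hp2⟩ | ⟨hp1, hp2, hp3⟩ <;>
      rcases hcq with ⟨hq1, hq2⟩ | ⟨hq1, hq2, hq3⟩
    · omega
    · omega
    · -- p type2, q type1 : q's zero is a zero above p's
      have := hp3 (q.1.val + 2) (by omega) hzq
      omega
    · have := hp3 (q.1.val + 2) (by omega) hzq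
      omega
  have hinj : Set.InjOn Φ S := by
    intro p hp q hq heq
    have h1 : p.1.val = q.1.val := by
      rcases lt_trichotomy p.1.val q.1.val with h | h | h
      · exact absurd heq (Nat.ne_of_lt (hmono p hp q hq h))
      · exact h
      · exact absurd heq.symm (Nat.ne_of_lt (hmono q hq p hp h))
    obtain ⟨h22p, _, _⟩ := hpair p hp
    obtain ⟨h22q, _, _⟩ := hpair q hq
    have h2 : p.2.val = q.2.val := by omega
    exact Prod.ext (Fin.ext h1) (Fin.ext h2)
  -- the spare plus step
  obtain ⟨w, hwP, hww⟩ : ∃ w, w ∈ P ∧ ∀ p ∈ S, Φ p ≠ w := by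
    by_cases he0 : e 0 = 1
    · refine ⟨0, ?_, ?_⟩
      · rw [hP_def]; simp only [Finset.mem_filter, Finset.mem_range]; exact ⟨hm, he0⟩
      · intro p hp
        obtain ⟨_, _, hcp⟩ := hΦfacts p hp
        rcases hcp with ⟨hp1, _⟩ | ⟨_, hp2, _⟩ <;> omega
    · have he0' : e 0 = -1 := by rcases hepm 0 hm with h | h; exact absurd h he0; exact h
      have hs1 : s 1 = -1 := by
        have h' := hstep 0
        rw [hs0, he0'] at h'
        simpa using h'
      have hTne : m ∈ {t | 0 < t ∧ s t = 0} := ⟨hm, hsm⟩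
      obtain ⟨z, hz_def⟩ : ∃ z : ℕ, z = sInf {t | 0 < t ∧ s t = 0} := ⟨_, rfl⟩
      have hzmem : 0 < z ∧ s z = 0 := hz_def ▸ Nat.sInf_mem ⟨m, hTne⟩
      have hzle : z ≤ m := hz_def ▸ Nat.sInf_le hTne
      have hzmin : ∀ t, 0 < t → s t = 0 → z ≤ t := fun t h1 h2 => hz_def ▸ Nat.sInf_le ⟨h1, h2⟩
      have hz2 : 2 ≤ z := by
        rcases Nat.lt_or_ge z 2 with h | h
        · exfalso
          have hone : z = 1 := by omega
          rw [hone] at hzmem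
          rw [hzmem.2] at hs1
          exact absurd hs1 (by norm_num)
        · exact h
      have hrneg : s (z - 1) < 0 := by
        refine hrun 1 (z - 1) (by omega) (by omega) (by rw [hs1]; norm_num) ?_
        intro t h1 h2 hzt
        have := hzmin t (by omega) hzt
        omega
      have hstz : s z = s (z - 1) + e (z - 1) := by
        have := hstep (z - 1)
        have hz1 : z - 1 + 1 = z := by omega
        rw [hz1] at this
        exact this
      have hez : e (z - 1) = 1 :=
        steinig_stepE hzmem.2 hstz hrneg (hepm (z - 1) (by omega))
      refine ⟨z - 1, ?_, ?_⟩
      · rw [hP_def]; simp only [Finset.mem_filter, Finset.mem_range]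
        exact ⟨by omega, hez⟩
      · intro p hp
        obtain ⟨_, hzn, _⟩ := hpair p hp
        obtain ⟨_, _, hcp⟩ := hΦfacts p hp
        have hzlen : z ≤ p.1.val + 2 := hzmin _ (by omega) hzn
        rcases hcp with ⟨hp1, hp2⟩ | ⟨hp1, hp2, _⟩
        · intro h
          rw [h] at hp2
          rw [hp2] at hrneg
          exact absurd hrneg (by norm_num)
        · intro h; omega
  -- putting it together
  have hwmem : w ∈ P.erase w → False := fun h => (Finset.mem_erase.mp h).1 rfl
  have hmaps : ∀ p ∈ S, Φ p ∈ ((P.erase w : Finset ℕ) : Set ℕ) := by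
    intro p hp
    simp only [Finset.coe_erase, Set.mem_diff, Set.mem_singleton_iff, Finset.mem_coe]
    exact ⟨hΦmem p hp, hww p hp⟩
  have hcount := Set.ncard_le_ncard_of_injOn (t := ((P.erase w : Finset ℕ) : Set ℕ)) Φ hmaps hinj
      (Finset.finite_toSet _)
  rw [Set.ncard_coe_finset] at hcount
  have hcard : (P.erase w).card = m / 2 - 1 := by
    rw [Finset.card_erase_of_mem hwP, hPcard]
  rw [hcard] at hcount
  exact hcount



/-- Combinatorial lemma underlying Steinig's argument: two distinct increasing `d`-tuples
give rise to a signed sum `∑ ε_j δ_{u_j}` with an even number `2 ≤ m ≤ 2d` of strictly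
increasing atoms, signs `±1` summing to zero, whose sequence of partial sums changes sign
at most `d - 1` times. -/
theorem statement5 (d : ℕ) (hd : 1 ≤ d) (a b : Fin d → ℝ)
    (ha : StrictMono a) (hb : StrictMono b) (hne : Set.range a ≠ Set.range b) :
    ∃ (m : ℕ) (u : Fin m → ℝ) (ε : Fin m → ℝ),
      Even m ∧ 2 ≤ m ∧ m ≤ 2 * d ∧ StrictMono u ∧
      (∀ j, ε j = 1 ∨ ε j = -1) ∧ (∑ j, ε j = 0) ∧
      (∀ f : ℝ → ℝ, ∑ i, f (a i) - ∑ i, f (b i) = ∑ j, ε j * f (u j)) ∧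
      (let α : Fin m → ℝ := fun l => ∑ j ∈ Finset.Iic l, ε j
       Set.ncard {p : Fin m × Fin m |
          p.1 < p.2 ∧ α p.1 * α p.2 < 0 ∧ ∀ l, p.1 < l → l < p.2 → α l = 0} ≤ d - 1) := by
  classical
  set A : Finset ℝ := Finset.image a Finset.univ with hA_def
  set B : Finset ℝ := Finset.image b Finset.univ with hB_def
  have hAr : Set.range a = (A : Set ℝ) := by
    rw [hA_def, Finset.coe_image, Finset.coe_univ, Set.image_univ]
  have hBr : Set.range b = (B : Set ℝ) := by
    rw [hB_def, Finset.coe_image, Finset.coe_univ, Set.image_univ]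
  have hAB : A ≠ B := by
    intro h
    apply hne
    rw [hAr, hBr, h]
  have hAcard : A.card = d := by
    rw [hA_def, Finset.card_image_of_injective _ ha.injective, Finset.card_univ,
      Fintype.card_fin]
  have hBcard : B.card = d := by
    rw [hB_def, Finset.card_image_of_injective _ hb.injective, Finset.card_univ,
      Fintype.card_fin]
  set SD : Finset ℝ := (A \ B) ∪ (B \ A) with hSD_def
  have hdisj : Disjoint (A \ B) (B \ A) := by
    rw [Finset.disjoint_left]
    intro x hx hy
    exact (Finset.mem_sdiff.mp hx).2 (Finset.mem_sdiff.mp hy).1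
  have hcards : (A \ B).card = (B \ A).card :=
    Finset.card_sdiff_comm (hAcard.trans hBcard.symm)
  have hmcard : SD.card = 2 * (A \ B).card := by
    rw [hSD_def, Finset.card_union_of_disjoint hdisj, ← hcards]
    ring
  have hpos : 1 ≤ (A \ B).card := by
    rcases Nat.eq_zero_or_pos (A \ B).card with h | h
    · exfalso
      have h1 : A \ B = ∅ := Finset.card_eq_zero.mp h
      have h2 : B \ A = ∅ := Finset.card_eq_zero.mp (hcards ▸ h)
      exact hAB (Finset.Subset.antisymm
        (Finset.sdiff_eq_empty_iff_subset.mp h1)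
        (Finset.sdiff_eq_empty_iff_subset.mp h2))
    · exact h
  have hdle : (A \ B).card ≤ d := by
    calc (A \ B).card ≤ A.card := Finset.card_le_card (Finset.sdiff_subset)
      _ = d := hAcard
  refine ⟨SD.card, fun j => ((SD.orderIsoOfFin rfl j : ℝ)),
    fun j => if ((SD.orderIsoOfFin rfl j : ℝ)) ∈ A then 1 else -1, ?_, ?_, ?_, ?_, ?_, ?_, ?_, ?_⟩
  · rw [hmcard]; exact even_two_mul _
  · rw [hmcard]
    calc 2 = 2 * 1 := by norm_num
      _ ≤ 2 * (A \ B).card := Nat.mul_le_mul_left 2 hpos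
  · rw [hmcard]
    exact Nat.mul_le_mul_left 2 hdle
  · intro i j hij
    exact Subtype.coe_lt_coe.mpr ((SD.orderIsoOfFin rfl).strictMono hij)
  · intro j
    by_cases h : ((SD.orderIsoOfFin rfl j : ℝ)) ∈ A
    · left; exact if_pos h
    · right; exact if_neg h
  · -- sum of signs is zero
    have h1 : ∑ j : Fin SD.card, (if ((SD.orderIsoOfFin rfl j : ℝ)) ∈ A then (1:ℝ) else -1)
        = ∑ x ∈ SD, (if x ∈ A then (1:ℝ) else -1) := by
      rw [← Finset.sum_coe_sort SD (fun x => if x ∈ A then (1:ℝ) else -1)]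
      exact Equiv.sum_comp (SD.orderIsoOfFin rfl).toEquiv
        (fun x : {x // x ∈ SD} => if (x : ℝ) ∈ A then (1:ℝ) else -1)
    rw [h1, hSD_def, Finset.sum_union hdisj]
    have h2 : ∑ x ∈ A \ B, (if x ∈ A then (1:ℝ) else -1) = (A \ B).card := by
      rw [Finset.sum_congr rfl (fun x hx => if_pos (Finset.mem_sdiff.mp hx).1)]
      simp
    have h3 : ∑ x ∈ B \ A, (if x ∈ A then (1:ℝ) else -1) = -((B \ A).card : ℝ) := by
      rw [Finset.sum_congr rfl (fun x hx => if_neg (Finset.mem_sdiff.mp hx).2)]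
      simp
    rw [h2, h3, hcards]
    ring
  · -- test-function identity
    intro f
    have hAf : ∑ i, f (a i) = ∑ x ∈ A, f x := by
      rw [hA_def, Finset.sum_image (fun x _ y _ h => ha.injective h)]
    have hBf : ∑ i, f (b i) = ∑ x ∈ B, f x := by
      rw [hB_def, Finset.sum_image (fun x _ y _ h => hb.injective h)]
    have h1 : ∑ j : Fin SD.card,
        (if ((SD.orderIsoOfFin rfl j : ℝ)) ∈ A then (1:ℝ) else -1) * f ((SD.orderIsoOfFin rfl j : ℝ))
        = ∑ x ∈ SD, (if x ∈ A then (1:ℝ) else -1) * f x := by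
      rw [← Finset.sum_coe_sort SD (fun x => (if x ∈ A then (1:ℝ) else -1) * f x)]
      exact Equiv.sum_comp (SD.orderIsoOfFin rfl).toEquiv
        (fun x : {x // x ∈ SD} => (if (x : ℝ) ∈ A then (1:ℝ) else -1) * f x)
    have h2 : ∑ x ∈ SD, (if x ∈ A then (1:ℝ) else -1) * f x
        = ∑ x ∈ A \ B, f x - ∑ x ∈ B \ A, f x := by
      rw [hSD_def, Finset.sum_union hdisj]
      have h2a : ∑ x ∈ A \ B, (if x ∈ A then (1:ℝ) else -1) * f x = ∑ x ∈ A \ B, f x := by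
        refine Finset.sum_congr rfl (fun x hx => ?_)
        rw [if_pos (Finset.mem_sdiff.mp hx).1, one_mul]
      have h2b : ∑ x ∈ B \ A, (if x ∈ A then (1:ℝ) else -1) * f x = -∑ x ∈ B \ A, f x := by
        rw [← Finset.sum_neg_distrib (f := f)]
        refine Finset.sum_congr rfl (fun x hx => ?_)
        rw [if_neg (Finset.mem_sdiff.mp hx).2]
        ring
      rw [h2a, h2b]
      ring
    have h3 : ∑ x ∈ A \ B, f x + ∑ x ∈ A ∩ B, f x = ∑ x ∈ A, f x := by
      rw [← Finset.sdiff_inter_self_left A B]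
      exact Finset.sum_sdiff Finset.inter_subset_left
    have h4 : ∑ x ∈ B \ A, f x + ∑ x ∈ A ∩ B, f x = ∑ x ∈ B, f x := by
      rw [Finset.inter_comm, ← Finset.sdiff_inter_self_left B A]
      exact Finset.sum_sdiff Finset.inter_subset_left
    rw [hAf, hBf, h1, h2]
    linarith [h3, h4]
  · -- sign-change bound
    have hm1 : 1 ≤ SD.card := by
      have : 1 ≤ 2 * (A \ B).card := le_trans hpos (Nat.le_mul_of_pos_left _ (by norm_num))
      rw [hmcard]
      exact this
    have hεpm : ∀ j : Fin SD.card,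
        (if ((SD.orderIsoOfFin rfl j : ℝ)) ∈ A then (1:ℝ) else -1) = 1 ∨
        (if ((SD.orderIsoOfFin rfl j : ℝ)) ∈ A then (1:ℝ) else -1) = -1 := by
      intro j
      by_cases h : ((SD.orderIsoOfFin rfl j : ℝ)) ∈ A
      · left; exact if_pos h
      · right; exact if_neg h
    have hsum0 : ∑ j : Fin SD.card, (if ((SD.orderIsoOfFin rfl j : ℝ)) ∈ A then (1:ℝ) else -1) = 0 := by
      have h1 : ∑ j : Fin SD.card, (if ((SD.orderIsoOfFin rfl j : ℝ)) ∈ A then (1:ℝ) else -1)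
          = ∑ x ∈ SD, (if x ∈ A then (1:ℝ) else -1) := by
        rw [← Finset.sum_coe_sort SD (fun x => if x ∈ A then (1:ℝ) else -1)]
        exact Equiv.sum_comp (SD.orderIsoOfFin rfl).toEquiv
          (fun x : {x // x ∈ SD} => if (x : ℝ) ∈ A then (1:ℝ) else -1)
      rw [h1, hSD_def, Finset.sum_union hdisj]
      have h2 : ∑ x ∈ A \ B, (if x ∈ A then (1:ℝ) else -1) = (A \ B).card := by
        rw [Finset.sum_congr rfl (fun x hx => if_pos (Finset.mem_sdiff.mp hx).1)]
        simp
      have h3 : ∑ x ∈ B \ A, (if x ∈ A then (1:ℝ) else -1) = -((B \ A).card : ℝ) := by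
        rw [Finset.sum_congr rfl (fun x hx => if_neg (Finset.mem_sdiff.mp hx).2)]
        simp
      rw [h2, h3, hcards]
      ring
    have hkey := steinig_key SD.card hm1
      (fun j => if ((SD.orderIsoOfFin rfl j : ℝ)) ∈ A then (1:ℝ) else -1) hεpm hsum0
    have hhalf : SD.card / 2 = (A \ B).card := by
      rw [hmcard]
      exact Nat.mul_div_cancel_left _ (by norm_num)
    refine le_trans hkey ?_
    rw [hhalf]
    exact Nat.sub_le_sub_right hdle 1
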